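/- For every 𝒯-category (X,a), the inclusion 𝒯-functor i_X: X̂ ↪ V^{|X|} has a left adjoint R_X: V^{|X|} → X̂ given by R_X(ψ)(𝔵) = ⋁_{𝔶∈TX} ψ(𝔶) ⊗ r(𝔵,𝔶), where r = T_ξ a · m_X°. -/

import Mathlib

universe u

namespace Paper

/-- A strict topological theory `𝒯 = (𝕋, V, ξ)`: a commutative unital quantale `V`
(a complete lattice with a commutative monoid structure whose multiplication preserves
suprema in each variable, with `⊥ < k`), a `Set`-monad `𝕋 = (T, e, m)` such that `T`
sends pullbacks to weak pullbacks and the naturality squares of `m` are weak pullbacks,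
and a `𝕋`-algebra structure `ξ : T V → V` for which `⊗` and `k` are `𝕋`-algebra
homomorphisms and `ξ_X := ξ ∘ T(-)` is a (monotone) natural transformation
`P_V → P_V T`. -/
structure TopTheory (V : Type u) [CompleteLattice V] (T : Type u → Type u) where
  tens : V → V → V
  unit : V
  tens_comm : ∀ u v : V, tens u v = tens v u
  tens_assoc : ∀ u v w : V, tens (tens u v) w = tens u (tens v w)
  unit_tens : ∀ v : V, tens unit v = v
  tens_sSup : ∀ (u : V) (S : Set V), tens u (sSup S) = ⨆ v ∈ S, tens u v
  bot_lt_unit : (⊥ : V) < unit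
  map : ∀ {X Y : Type u}, (X → Y) → T X → T Y
  map_id : ∀ {X : Type u}, map (id : X → X) = id
  map_comp : ∀ {X Y Z : Type u} (g : Y → Z) (f : X → Y) (𝔵 : T X),
    map (g ∘ f) 𝔵 = map g (map f 𝔵)
  e : ∀ {X : Type u}, X → T X
  m : ∀ {X : Type u}, T (T X) → T X
  e_nat : ∀ {X Y : Type u} (f : X → Y) (x : X), map f (e x) = e (f x)
  m_nat : ∀ {X Y : Type u} (f : X → Y) (𝔛 : T (T X)), map f (m 𝔛) = m (map (map f) 𝔛)
  m_e : ∀ {X : Type u} (𝔵 : T X), m (e 𝔵) = 𝔵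
  m_map_e : ∀ {X : Type u} (𝔵 : T X), m (map e 𝔵) = 𝔵
  m_assoc : ∀ {X : Type u} (𝔜 : T (T (T X))), m (m 𝔜) = m (map m 𝔜)
  /-- (BC): `T` sends pullbacks to weak pullbacks. -/
  map_bc : ∀ {X Y Z : Type u} (f : X → Z) (g : Y → Z) (𝔵 : T X) (𝔶 : T Y),
    map f 𝔵 = map g 𝔶 →
    ∃ 𝔴 : T {p : X × Y // f p.1 = g p.2},
      map (fun p => p.1.1) 𝔴 = 𝔵 ∧ map (fun p => p.1.2) 𝔴 = 𝔶
  /-- (BC): every naturality square of `m` is a weak pullback. -/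
  m_bc : ∀ {X Y : Type u} (f : X → Y) (𝔜 : T (T Y)) (𝔵 : T X),
    m 𝔜 = map f 𝔵 → ∃ 𝔛 : T (T X), map (map f) 𝔛 = 𝔜 ∧ m 𝔛 = 𝔵
  xi : T V → V
  xi_e : ∀ v : V, xi (e v) = v
  xi_m : ∀ 𝔙 : T (T V), xi (m 𝔙) = xi (map xi 𝔙)
  /-- `k : 1 → V` is a `𝕋`-algebra homomorphism. -/
  xi_unit : ∀ {X : Type u} (𝔵 : T X), xi (map (fun _ => unit) 𝔵) = unit
  /-- `⊗ : V × V → V` is a `𝕋`-algebra homomorphism. -/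
  xi_tens : ∀ 𝔴 : T (V × V),
    xi (map (fun p => tens p.1 p.2) 𝔴) = tens (xi (map Prod.fst 𝔴)) (xi (map Prod.snd 𝔴))
  /-- each component `ξ_X : V^X → V^{T X}` is monotone. -/
  xi_mono : ∀ {X : Type u} (φ φ' : X → V), (∀ x, φ x ≤ φ' x) →
    ∀ 𝔵 : T X, xi (map φ 𝔵) ≤ xi (map φ' 𝔵)
  /-- `ξ_X` is a natural transformation `P_V → P_V T`. -/
  xi_nat : ∀ {X Y : Type u} (f : X → Y) (φ : X → V) (𝔶 : T Y),
    (⨆ 𝔵 : {𝔵 : T X // map f 𝔵 = 𝔶}, xi (map φ 𝔵.1)) =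
      xi (map (fun y => ⨆ x : {x : X // f x = y}, φ x.1) 𝔶)

namespace TopTheory

variable {V : Type u} [CompleteLattice V] {T : Type u → Type u}

/-- The internal hom of the quantale: `u ⊗ (-) ⊣ hom (u, -)`. -/
def ihom (𝒯 : TopTheory V T) (u w : V) : V := sSup {z | 𝒯.tens u z ≤ w}

/-- The extension `T_ξ` of `T : Set → Set` to `V`-relations. -/
def Txi (𝒯 : TopTheory V T) {X Y : Type u} (r : X → Y → V) (𝔵 : T X) (𝔶 : T Y) : V :=
  ⨆ 𝔴 : {w : T (X × Y) // 𝒯.map Prod.fst w = 𝔵 ∧ 𝒯.map Prod.snd w = 𝔶},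
    𝒯.xi (𝒯.map (fun p => r p.1 p.2) 𝔴.1)

/-- Kleisli convolution `β ∘ α = β · T_ξ α · m_X°` of `𝒯`-relations
`α : X ⇸ Y` and `β : Y ⇸ Z`. -/
def kleisli (𝒯 : TopTheory V T) {X Y Z : Type u}
    (β : T Y → Z → V) (α : T X → Y → V) (𝔵 : T X) (z : Z) : V :=
  ⨆ 𝔛 : {𝔛 : T (T X) // 𝒯.m 𝔛 = 𝔵}, ⨆ 𝔶 : T Y, 𝒯.tens (𝒯.Txi α 𝔛.1 𝔶) (β 𝔶 z)

/-- The `𝒯`-relation `e_X° : X ⇸ X`. -/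
def unitRel (𝒯 : TopTheory V T) (X : Type u) (𝔵 : T X) (x : X) : V :=
  ⨆ _ : 𝔵 = 𝒯.e x, 𝒯.unit

/-- A `𝒯`-category structure on `X`: a `𝒯`-relation `a : X ⇸ X` with
`e_X° ≤ a` and `a ∘ a ≤ a`. -/
structure TCatStr (𝒯 : TopTheory V T) (X : Type u) where
  rel : T X → X → V
  le_refl : ∀ x : X, 𝒯.unit ≤ rel (𝒯.e x) x
  comp : ∀ (𝔵 : T X) (x : X), 𝒯.kleisli rel rel 𝔵 x ≤ rel 𝔵 x

/-- The `𝒯`-module conditions `φ ∘ a ≤ φ` and `b ∘ φ ≤ φ` for a `𝒯`-relation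
`φ : X ⇸ Y` between (structures underlying) `𝒯`-categories `(X,a)` and `(Y,b)`. -/
def IsTModRel (𝒯 : TopTheory V T) {X Y : Type u}
    (a : T X → X → V) (b : T Y → Y → V) (φ : T X → Y → V) : Prop :=
  (∀ 𝔵 y, 𝒯.kleisli φ a 𝔵 y ≤ φ 𝔵 y) ∧ (∀ 𝔵 y, 𝒯.kleisli b φ 𝔵 y ≤ φ 𝔵 y)

variable {𝒯 : TopTheory V T}

/-- `f_* = b · T f`. -/
def modStar {X Y : Type u} (b : 𝒯.TCatStr Y) (f : X → Y) (𝔵 : T X) (y : Y) : V :=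
  b.rel (𝒯.map f 𝔵) y

/-- `f^* = f° · b`. -/
def modCostar {X Y : Type u} (b : 𝒯.TCatStr Y) (f : X → Y) (𝔶 : T Y) (x : X) : V :=
  b.rel 𝔶 (f x)

/-- The extension `φ ⟜ ψ` of `φ : X ⇸∘ Y` along `ψ : X ⇸∘ Z`, given by
`(φ ⟜ ψ)(𝔷,y) = ⋀_{𝔵 ∈ T X} hom((T_ξ ψ · m_X°)(𝔵,𝔷), φ(𝔵,y))`. -/
def extend (𝒯 : TopTheory V T) {X Y Z : Type u}
    (φ : T X → Y → V) (ψ : T X → Z → V) (𝔷 : T Z) (y : Y) : V :=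
  ⨅ 𝔵 : T X, 𝒯.ihom (⨆ 𝔛 : {𝔛 : T (T X) // 𝒯.m 𝔛 = 𝔵}, 𝒯.Txi ψ 𝔛.1 𝔷) (φ 𝔵 y)

/-- A `𝒯`-functor `f : (X,a) → (Y,b)`. -/
def IsTFunctor {X Y : Type u} (a : 𝒯.TCatStr X) (b : 𝒯.TCatStr Y) (f : X → Y) : Prop :=
  ∀ (𝔵 : T X) (x : X), a.rel 𝔵 x ≤ b.rel (𝒯.map f 𝔵) (f x)

/-- A fully faithful `𝒯`-functor. -/
def FullyFaithful {X Y : Type u} (a : 𝒯.TCatStr X) (b : 𝒯.TCatStr Y) (f : X → Y) : Prop :=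
  ∀ (𝔵 : T X) (x : X), a.rel 𝔵 x = b.rel (𝒯.map f 𝔵) (f x)

/-- The order `f ≤ g ⟺ f^* ≤ g^*` on `𝒯`-functors `X → (Y,b)`. -/
def funLE {X Y : Type u} (b : 𝒯.TCatStr Y) (f g : X → Y) : Prop :=
  ∀ (𝔶 : T Y) (x : X), b.rel 𝔶 (f x) ≤ b.rel 𝔶 (g x)

/-- Equivalence `f ≅ g ⟺ f^* = g^*` of `𝒯`-functors `X → (Y,b)`. -/
def FunEquiv {X Y : Type u} (b : 𝒯.TCatStr Y) (f g : X → Y) : Prop :=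
  ∀ (𝔶 : T Y) (x : X), b.rel 𝔶 (f x) = b.rel 𝔶 (g x)

/-- `f ⊣ g`:  `1_X ≤ g·f` and `f·g ≤ 1_Y`. -/
def IsAdjunction {X Y : Type u} (a : 𝒯.TCatStr X) (b : 𝒯.TCatStr Y)
    (f : X → Y) (g : Y → X) : Prop :=
  (∀ (𝔵 : T X) (x : X), a.rel 𝔵 x ≤ a.rel 𝔵 (g (f x))) ∧
    (∀ (𝔶 : T Y) (y : Y), b.rel 𝔶 (f (g y)) ≤ b.rel 𝔶 y)

/-- A left adjoint `𝒯`-functor. -/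
def IsLeftAdjoint {X Y : Type u} (a : 𝒯.TCatStr X) (b : 𝒯.TCatStr Y) (f : X → Y) : Prop :=
  IsTFunctor a b f ∧ ∃ g : Y → X, IsTFunctor b a g ∧ IsAdjunction a b f g

/-- L-separatedness: equivalent `𝒯`-functors into `X` are equal. -/
def Separated {X : Type u} (a : 𝒯.TCatStr X) : Prop :=
  ∀ (A : Type u) (as : 𝒯.TCatStr A) (f g : A → X),
    IsTFunctor as a f → IsTFunctor as a g → FunEquiv a f g → f = g

/-- Injectivity with respect to fully faithful `𝒯`-functors. -/
def Injective {X : Type u} (a : 𝒯.TCatStr X) : Prop :=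
  ∀ (A B : Type u) (as : 𝒯.TCatStr A) (bs : 𝒯.TCatStr B) (f : A → X) (i : A → B),
    IsTFunctor as a f → IsTFunctor as bs i → FullyFaithful as bs i →
      ∃ g : B → X, IsTFunctor bs a g ∧ FunEquiv a (g ∘ i) f

/-- `g : Z → X` is the `ψ`-weighted colimit of `h : A → X`, i.e. `g_* = h_* ⟜ ψ`. -/
def IsColimit {X A Z : Type u} (a : 𝒯.TCatStr X) (h : A → X) (ψ : T A → Z → V)
    (g : Z → X) : Prop :=
  ∀ (𝔷 : T Z) (x : X), modStar a g 𝔷 x = 𝒯.extend (modStar a h) ψ 𝔷 x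

/-- Cocompleteness: every weighted diagram has a colimit. -/
def Cocomplete {X : Type u} (a : 𝒯.TCatStr X) : Prop :=
  ∀ (A Z : Type u) (as : 𝒯.TCatStr A) (cs : 𝒯.TCatStr Z) (h : A → X),
    IsTFunctor as a h → ∀ ψ : T A → Z → V, 𝒯.IsTModRel as.rel cs.rel ψ →
      ∃ g : Z → X, IsTFunctor cs a g ∧ IsColimit a h ψ g

/-- Cocontinuity: preservation of all weighted colimits. -/
def Cocontinuous {X Y : Type u} (a : 𝒯.TCatStr X) (b : 𝒯.TCatStr Y) (f : X → Y) : Prop :=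
  ∀ (A Z : Type u) (as : 𝒯.TCatStr A) (cs : 𝒯.TCatStr Z) (h : A → X)
    (ψ : T A → Z → V) (g : Z → X),
    IsTFunctor as a h → 𝒯.IsTModRel as.rel cs.rel ψ → IsTFunctor cs a g →
      IsColimit a h ψ g → IsColimit b (f ∘ h) ψ (f ∘ g)

/-- A presheaf on `(X,a)`: a `𝒯`-module `X ⇸∘ G`, where `G = (1, e_1°)`. -/
def IsPresheaf {X : Type u} (a : 𝒯.TCatStr X) (ψ : T X → V) : Prop :=
  𝒯.IsTModRel a.rel (𝒯.unitRel PUnit) (fun 𝔵 _ => ψ 𝔵)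

/-- The underlying set of the presheaf `𝒯`-category `X̂`. -/
def Hat {X : Type u} (a : 𝒯.TCatStr X) : Type u := {ψ : T X → V // IsPresheaf a ψ}

/-- The `𝒯`-category structure `⟦-,-⟧` of `V^{|X|}`. -/
def powRel (𝒯 : TopTheory V T) (X : Type u) (𝔭 : T (T X → V)) (ψ : T X → V) : V :=
  ⨅ 𝔮 : {q : T ((T X) × (T X → V)) // 𝒯.map Prod.snd q = 𝔭},
    𝒯.ihom (𝒯.xi (𝒯.map (fun p => p.2 p.1) 𝔮.1)) (ψ (𝒯.m (𝒯.map Prod.fst 𝔮.1)))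

/-- `hs` is the `𝒯`-category structure on `X̂` inherited from `V^{|X|}`. -/
def IsHatStr {X : Type u} (a : 𝒯.TCatStr X) (hs : 𝒯.TCatStr (Hat a)) : Prop :=
  ∀ (𝔭 : T (Hat a)) (ψ : Hat a), hs.rel 𝔭 ψ = 𝒯.powRel X (𝒯.map Subtype.val 𝔭) ψ.1

/-- `y` is the Yoneda functor `X → X̂`, `y x = a(-,x)`. -/
def IsYoneda {X : Type u} (a : 𝒯.TCatStr X) (y : X → Hat a) : Prop :=
  ∀ (x : X) (𝔵 : T X), (y x).1 𝔵 = a.rel 𝔵 x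

/-- The underlying map `ψ ↦ ψ ∘ f^*` of `f̂ : X̂ → Ŷ`. -/
def hatMapRel {X Y : Type u} (b : 𝒯.TCatStr Y) (f : X → Y) (ψ : T X → V) (𝔶 : T Y) : V :=
  𝒯.kleisli (fun 𝔵 (_ : PUnit.{u + 1}) => ψ 𝔵) (modCostar b f) 𝔶 PUnit.unit

/-- `fh` is the `𝒯`-functor `f̂ : X̂ → Ŷ`, with underlying map `ψ ↦ ψ ∘ f^*`. -/
def IsHatMap {X Y : Type u} (a : 𝒯.TCatStr X) (b : 𝒯.TCatStr Y) (f : X → Y)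
    (fh : Hat a → Hat b) : Prop :=
  ∀ (ψ : Hat a) (𝔶 : T Y), (fh ψ).1 𝔶 = hatMapRel b f ψ.1 𝔶

/-- An inhabited `𝒯`-module: `k ≤ ⋀_y ⋁_𝔵 φ(𝔵,y)`. -/
def InhabitedMod (𝒯 : TopTheory V T) {X Y : Type u} (φ : T X → Y → V) : Prop :=
  𝒯.unit ≤ ⨅ y : Y, ⨆ 𝔵 : T X, φ 𝔵 y

/-- A dense `𝒯`-functor: `f_*` is inhabited. -/
def Dense {X Y : Type u} (b : 𝒯.TCatStr Y) (f : X → Y) : Prop :=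
  𝒯.InhabitedMod (modStar b f)

/-- The underlying set of `X⁺ = {ψ ∈ X̂ ∣ ψ inhabited}`. -/
def Plus {X : Type u} (a : 𝒯.TCatStr X) : Type u :=
  {ψ : Hat a // 𝒯.InhabitedMod (fun 𝔵 (_ : PUnit.{u + 1}) => ψ.1 𝔵)}

/-- `ps` is the `𝒯`-category structure on `X⁺` inherited from `X̂`. -/
def IsPlusStr {X : Type u} (a : 𝒯.TCatStr X) (hs : 𝒯.TCatStr (Hat a))
    (ps : 𝒯.TCatStr (Plus a)) : Prop :=
  ∀ (𝔭 : T (Plus a)) (ψ : Plus a), ps.rel 𝔭 ψ = hs.rel (𝒯.map Subtype.val 𝔭) ψ.1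

/-- Inhabited-cocompleteness: all colimits with inhabited weights exist. -/
def ICocomplete {X : Type u} (a : 𝒯.TCatStr X) : Prop :=
  ∀ (A Z : Type u) (as : 𝒯.TCatStr A) (cs : 𝒯.TCatStr Z) (h : A → X),
    IsTFunctor as a h → ∀ ψ : T A → Z → V, 𝒯.IsTModRel as.rel cs.rel ψ →
      𝒯.InhabitedMod ψ → ∃ g : Z → X, IsTFunctor cs a g ∧ IsColimit a h ψ g

/-- Inhabited-cocontinuity: preservation of all colimits with inhabited weights. -/
def ICocontinuous {X Y : Type u} (a : 𝒯.TCatStr X) (b : 𝒯.TCatStr Y) (f : X → Y) : Prop :=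
  ∀ (A Z : Type u) (as : 𝒯.TCatStr A) (cs : 𝒯.TCatStr Z) (h : A → X)
    (ψ : T A → Z → V) (g : Z → X),
    IsTFunctor as a h → 𝒯.IsTModRel as.rel cs.rel ψ → 𝒯.InhabitedMod ψ →
      IsTFunctor cs a g → IsColimit a h ψ g → IsColimit b (f ∘ h) ψ (f ∘ g)


/-! ### Auxiliary lemmas for Statement 16 -/

section Statement16Aux

lemma aux_map_map (𝒯 : TopTheory V T) {A B C : Type u} (f : A → B) (g : B → C) (𝔵 : T A) :
    𝒯.map g (𝒯.map f 𝔵) = 𝒯.map (fun x => g (f x)) 𝔵 := by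
  rw [← 𝒯.map_comp]; rfl

lemma aux_map_congr (𝒯 : TopTheory V T) {A B : Type u} {f g : A → B}
    (h : ∀ x, f x = g x) (𝔵 : T A) : 𝒯.map f 𝔵 = 𝒯.map g 𝔵 := by
  rw [funext h]

lemma aux_tens_iSup (𝒯 : TopTheory V T) (u : V) {ι : Sort*} (f : ι → V) :
    𝒯.tens u (⨆ i, f i) = ⨆ i, 𝒯.tens u (f i) := by
  rw [iSup, 𝒯.tens_sSup, iSup_range]

lemma aux_tens_iSup_left (𝒯 : TopTheory V T) (u : V) {ι : Sort*} (f : ι → V) :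
    𝒯.tens (⨆ i, f i) u = ⨆ i, 𝒯.tens (f i) u := by
  rw [𝒯.tens_comm, aux_tens_iSup]
  exact iSup_congr fun i => 𝒯.tens_comm _ _

lemma aux_tens_le_right (𝒯 : TopTheory V T) (u : V) {v v' : V} (h : v ≤ v') :
    𝒯.tens u v ≤ 𝒯.tens u v' := by
  have hs : sSup ({v, v'} : Set V) = v' := by
    rw [sSup_pair, sup_eq_right.mpr h]
  calc 𝒯.tens u v ≤ ⨆ w ∈ ({v, v'} : Set V), 𝒯.tens u w := le_biSup _ (by simp)
  _ = 𝒯.tens u (sSup {v, v'}) := (𝒯.tens_sSup u _).symm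
  _ = 𝒯.tens u v' := by rw [hs]

lemma aux_tens_mono (𝒯 : TopTheory V T) {u u' v v' : V} (hu : u ≤ u') (hv : v ≤ v') :
    𝒯.tens u v ≤ 𝒯.tens u' v' := by
  refine le_trans (aux_tens_le_right 𝒯 u hv) ?_
  rw [𝒯.tens_comm u v', 𝒯.tens_comm u' v']
  exact aux_tens_le_right 𝒯 v' hu

lemma aux_tens_unit_right (𝒯 : TopTheory V T) (v : V) : 𝒯.tens v 𝒯.unit = v := by
  rw [𝒯.tens_comm, 𝒯.unit_tens]

lemma aux_le_ihom (𝒯 : TopTheory V T) {u z w : V} (h : 𝒯.tens u z ≤ w) :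
    z ≤ 𝒯.ihom u w := le_sSup h

lemma aux_tens_ihom (𝒯 : TopTheory V T) (u w : V) : 𝒯.tens u (𝒯.ihom u w) ≤ w := by
  rw [TopTheory.ihom, sSup_eq_iSup', aux_tens_iSup]
  exact iSup_le fun z => z.2

lemma aux_ihom_le (𝒯 : TopTheory V T) {u z w : V} (h : z ≤ 𝒯.ihom u w) :
    𝒯.tens u z ≤ w :=
  le_trans (aux_tens_le_right 𝒯 u h) (aux_tens_ihom 𝒯 u w)

lemma aux_of_unit_le_ihom (𝒯 : TopTheory V T) {u w : V} (h : 𝒯.unit ≤ 𝒯.ihom u w) :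
    u ≤ w := by
  have h2 := aux_ihom_le 𝒯 h
  rwa [aux_tens_unit_right] at h2

lemma aux_ihom_mono (𝒯 : TopTheory V T) (u : V) {w w' : V} (h : w ≤ w') :
    𝒯.ihom u w ≤ 𝒯.ihom u w' :=
  sSup_le_sSup fun z hz => le_trans hz h

lemma aux_powRel_mono (𝒯 : TopTheory V T) {X : Type u} (𝔭 : T (T X → V))
    {ψ ψ' : T X → V} (h : ∀ 𝔵, ψ 𝔵 ≤ ψ' 𝔵) :
    𝒯.powRel X 𝔭 ψ ≤ 𝒯.powRel X 𝔭 ψ' :=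
  le_iInf fun 𝔮 => (iInf_le _ 𝔮).trans (aux_ihom_mono 𝒯 _ (h _))

/-- The relation `r = T_ξ a · m_X°`. -/
def auxRr (𝒯 : TopTheory V T) {X : Type u} (a : 𝒯.TCatStr X) (𝔵 𝔶 : T X) : V :=
  ⨆ 𝔛 : {𝔛 : T (T X) // 𝒯.m 𝔛 = 𝔵}, 𝒯.Txi a.rel 𝔛.1 𝔶

/-- The underlying map of the reflection `R_X`. -/
def auxRfun (𝒯 : TopTheory V T) {X : Type u} (a : 𝒯.TCatStr X) (ψ : T X → V) (𝔵 : T X) : V :=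
  ⨆ 𝔶 : T X, 𝒯.tens (ψ 𝔶) (auxRr 𝒯 a 𝔵 𝔶)

lemma aux_unit_le_rr (𝒯 : TopTheory V T) {X : Type u} (a : 𝒯.TCatStr X) (𝔵 : T X) :
    𝒯.unit ≤ auxRr 𝒯 a 𝔵 𝔵 := by
  refine le_trans ?_ (le_iSup _ ⟨𝒯.map 𝒯.e 𝔵, 𝒯.m_map_e 𝔵⟩)
  refine le_trans ?_ (le_iSup _ (⟨𝒯.map (fun x => (𝒯.e x, x)) 𝔵, ?_, ?_⟩ :
    {w : T (T X × X) // 𝒯.map Prod.fst w = 𝒯.map 𝒯.e 𝔵 ∧ 𝒯.map Prod.snd w = 𝔵}))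
  · rw [aux_map_map]
    calc 𝒯.unit = 𝒯.xi (𝒯.map (fun _ => 𝒯.unit) 𝔵) := (𝒯.xi_unit 𝔵).symm
    _ ≤ _ := 𝒯.xi_mono _ _ (fun x => a.le_refl x) 𝔵
  · rw [aux_map_map]
  · rw [aux_map_map]
    exact congrFun 𝒯.map_id 𝔵

lemma aux_core (𝒯 : TopTheory V T) {X : Type u} (a : 𝒯.TCatStr X) {𝔵 : T X}
    (𝔛 : T (T X)) (h𝔛 : 𝒯.m 𝔛 = 𝔵) (𝔶 𝔷 : T X) :
    𝒯.tens (𝒯.Txi a.rel 𝔛 𝔶) (auxRr 𝒯 a 𝔶 𝔷) ≤ auxRr 𝒯 a 𝔵 𝔷 := by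
  rw [show auxRr 𝒯 a 𝔶 𝔷 = ⨆ 𝔜 : {𝔜 : T (T X) // 𝒯.m 𝔜 = 𝔶}, 𝒯.Txi a.rel 𝔜.1 𝔷 from rfl,
    aux_tens_iSup]
  refine iSup_le fun 𝔜 => ?_
  rw [𝒯.tens_comm, show 𝒯.Txi a.rel 𝔛 𝔶 = ⨆ 𝔴 : {w : T (T X × X) //
      𝒯.map Prod.fst w = 𝔛 ∧ 𝒯.map Prod.snd w = 𝔶},
      𝒯.xi (𝒯.map (fun p => a.rel p.1 p.2) 𝔴.1) from rfl, aux_tens_iSup]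
  refine iSup_le fun 𝔴 => ?_
  rw [𝒯.tens_comm, show 𝒯.Txi a.rel 𝔜.1 𝔷 = ⨆ 𝔴' : {w : T (T X × X) //
      𝒯.map Prod.fst w = 𝔜.1 ∧ 𝒯.map Prod.snd w = 𝔷},
      𝒯.xi (𝒯.map (fun p => a.rel p.1 p.2) 𝔴'.1) from rfl, aux_tens_iSup]
  refine iSup_le fun 𝔴' => ?_
  -- now: tens (ξ (T a 𝔴)) (ξ (T a 𝔴')) ≤ auxRr 𝒯 a 𝔵 𝔷
  obtain ⟨𝔚, h𝔚1, h𝔚2⟩ := 𝒯.m_bc Prod.snd 𝔜.1 𝔴.1 (𝔜.2.trans 𝔴.2.2.symm)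
  obtain ⟨𝔘, h𝔘1, h𝔘2⟩ :=
    𝒯.map_bc (𝒯.map Prod.snd) Prod.fst 𝔚 𝔴'.1 (h𝔚1.trans 𝔴'.2.1.symm)
  have e1 : 𝒯.xi (𝒯.map (fun p : T X × X => a.rel p.1 p.2) 𝔴.1)
      = 𝒯.xi (𝒯.map (fun u => 𝒯.xi (𝒯.map (fun p : T X × X => a.rel p.1 p.2) u.1.1)) 𝔘) := by
    rw [← h𝔚2, 𝒯.m_nat, 𝒯.xi_m, aux_map_map, ← h𝔘1, aux_map_map]
  have e2 : 𝒯.xi (𝒯.map (fun p : T X × X => a.rel p.1 p.2) 𝔴'.1)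
      = 𝒯.xi (𝒯.map (fun u => a.rel u.1.2.1 u.1.2.2) 𝔘) := by
    rw [← h𝔘2, aux_map_map]
  have e3 : 𝒯.tens
      (𝒯.xi (𝒯.map (fun u => 𝒯.xi (𝒯.map (fun p : T X × X => a.rel p.1 p.2) u.1.1)) 𝔘))
      (𝒯.xi (𝒯.map (fun u => a.rel u.1.2.1 u.1.2.2) 𝔘))
      = 𝒯.xi (𝒯.map (fun u => 𝒯.tens
        (𝒯.xi (𝒯.map (fun p : T X × X => a.rel p.1 p.2) u.1.1))
        (a.rel u.1.2.1 u.1.2.2)) 𝔘) := by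
    have h0 := 𝒯.xi_tens (𝒯.map (fun u =>
      (𝒯.xi (𝒯.map (fun p : T X × X => a.rel p.1 p.2) u.1.1),
        a.rel u.1.2.1 u.1.2.2)) 𝔘)
    rw [aux_map_map, aux_map_map, aux_map_map] at h0
    exact h0.symm
  have pw : ∀ u : {p : T (T X × X) × (T X × X) // 𝒯.map Prod.snd p.1 = p.2.1},
      𝒯.tens (𝒯.xi (𝒯.map (fun p : T X × X => a.rel p.1 p.2) u.1.1))
        (a.rel u.1.2.1 u.1.2.2)
      ≤ a.rel (𝒯.m (𝒯.map Prod.fst u.1.1)) u.1.2.2 := by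
    intro u
    have h1 : 𝒯.xi (𝒯.map (fun p : T X × X => a.rel p.1 p.2) u.1.1)
        ≤ 𝒯.Txi a.rel (𝒯.map Prod.fst u.1.1) u.1.2.1 :=
      le_iSup_of_le ⟨u.1.1, rfl, u.2⟩ le_rfl
    refine le_trans (aux_tens_mono 𝒯 h1 le_rfl) ?_
    refine le_trans ?_ (a.comp (𝒯.m (𝒯.map Prod.fst u.1.1)) u.1.2.2)
    exact le_iSup_of_le ⟨𝒯.map Prod.fst u.1.1, rfl⟩ (le_iSup_of_le u.1.2.1 le_rfl)
  refine le_trans (le_of_eq (by rw [e1, e2, e3]))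
    (le_trans (𝒯.xi_mono _ _ pw 𝔘) ?_)
  have hm : 𝒯.m (𝒯.map (fun u : {p : T (T X × X) × (T X × X) //
      𝒯.map Prod.snd p.1 = p.2.1} => 𝒯.m (𝒯.map Prod.fst u.1.1)) 𝔘) = 𝔵 := by
    have step : 𝒯.map (fun u : {p : T (T X × X) × (T X × X) //
        𝒯.map Prod.snd p.1 = p.2.1} => 𝒯.m (𝒯.map Prod.fst u.1.1)) 𝔘
        = 𝒯.map 𝒯.m (𝒯.map (𝒯.map Prod.fst) (𝒯.map (fun p => p.1.1) 𝔘)) := by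
      rw [aux_map_map, aux_map_map]
    rw [step, h𝔘1, ← 𝒯.m_assoc, ← 𝒯.m_nat, h𝔚2, 𝔴.2.1, h𝔛]
  refine le_iSup_of_le ⟨_, hm⟩ ?_
  refine le_iSup_of_le (⟨𝒯.map (fun u => (𝒯.m (𝒯.map Prod.fst u.1.1), u.1.2.2)) 𝔘,
    ?_, ?_⟩ : {w : T (T X × X) // _ ∧ _}) (le_of_eq ?_)
  · rw [aux_map_map]
  · rw [aux_map_map, show 𝒯.map (fun u : {p : T (T X × X) × (T X × X) //
        𝒯.map Prod.snd p.1 = p.2.1} => u.1.2.2) 𝔘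
        = 𝒯.map Prod.snd (𝒯.map (fun p => p.1.2) 𝔘) from (aux_map_map 𝒯 _ _ 𝔘).symm,
      h𝔘2, 𝔴'.2.2]
  · rw [aux_map_map]

/-- First leg of the flattened representation of `R_X ψ`. -/
def auxF (𝒯 : TopTheory V T) (X : Type u) :
    ((T X → V) × T (T X × X)) → T X × (T X → V) :=
  fun d => (𝒯.m (𝒯.map Prod.fst d.2), d.1)

/-- Second leg of the flattened representation of `R_X ψ`. -/
def auxG (𝒯 : TopTheory V T) {X : Type u} (a : 𝒯.TCatStr X) :
    ((T X → V) × T (T X × X)) → V :=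
  fun d => 𝒯.tens (d.1 (𝒯.map Prod.snd d.2))
    (𝒯.xi (𝒯.map (fun q : T X × X => a.rel q.1 q.2) d.2))

lemma aux_hH (𝒯 : TopTheory V T) {X : Type u} (a : 𝒯.TCatStr X) (p : T X × (T X → V)) :
    auxRfun 𝒯 a p.2 p.1
      = ⨆ d : {d : (T X → V) × T (T X × X) // auxF 𝒯 X d = p}, auxG 𝒯 a d.1 := by
  apply le_antisymm
  · refine iSup_le fun 𝔶 => ?_
    rw [show auxRr 𝒯 a p.1 𝔶 = ⨆ 𝔛 : {𝔛 : T (T X) // 𝒯.m 𝔛 = p.1}, 𝒯.Txi a.rel 𝔛.1 𝔶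
      from rfl, aux_tens_iSup]
    refine iSup_le fun 𝔛 => ?_
    rw [show 𝒯.Txi a.rel 𝔛.1 𝔶 = ⨆ 𝔴 : {w : T (T X × X) //
        𝒯.map Prod.fst w = 𝔛.1 ∧ 𝒯.map Prod.snd w = 𝔶},
        𝒯.xi (𝒯.map (fun q => a.rel q.1 q.2) 𝔴.1) from rfl, aux_tens_iSup]
    refine iSup_le fun 𝔴 => ?_
    have hpf : auxF 𝒯 X (p.2, 𝔴.1) = p := by
      show (𝒯.m (𝒯.map Prod.fst 𝔴.1), p.2) = p
      rw [𝔴.2.1, 𝔛.2]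
    have hval : 𝒯.tens (p.2 𝔶) (𝒯.xi (𝒯.map (fun q : T X × X => a.rel q.1 q.2) 𝔴.1))
        = auxG 𝒯 a (p.2, 𝔴.1) := by
      show _ = 𝒯.tens (p.2 (𝒯.map Prod.snd 𝔴.1)) _
      rw [𝔴.2.2]
    exact (le_of_eq hval).trans (le_iSup (fun d : {d : (T X → V) × T (T X × X) //
      auxF 𝒯 X d = p} => auxG 𝒯 a d.1) ⟨(p.2, 𝔴.1), hpf⟩)
  · refine iSup_le fun d => ?_
    have h1 : 𝒯.m (𝒯.map Prod.fst d.1.2) = p.1 := congrArg Prod.fst d.2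
    have h2 : d.1.1 = p.2 := congrArg Prod.snd d.2
    refine le_trans ?_ (le_iSup _ (𝒯.map Prod.snd d.1.2))
    refine aux_tens_mono 𝒯 (le_of_eq (congrFun h2 _)) ?_
    exact le_iSup_of_le ⟨𝒯.map Prod.fst d.1.2, h1⟩ (le_iSup_of_le ⟨d.1.2, rfl, rfl⟩ le_rfl)

lemma aux_G1 (𝒯 : TopTheory V T) {X : Type u} (a : 𝒯.TCatStr X)
    (𝔭 : T (T X → V)) (φ : T X → V) :
    𝒯.powRel X 𝔭 φ ≤ 𝒯.powRel X (𝒯.map (auxRfun 𝒯 a) 𝔭) (auxRfun 𝒯 a φ) := by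
  refine le_iInf fun 𝔮 => ?_
  refine aux_le_ihom 𝒯 ?_
  obtain ⟨𝔴, h𝔴1, h𝔴2⟩ := 𝒯.map_bc Prod.snd (auxRfun 𝒯 a) 𝔮.1 𝔭 𝔮.2
  have hnat := 𝒯.xi_nat (auxF 𝒯 X) (auxG 𝒯 a) (𝒯.map (fun u => (u.1.1.1, u.1.2)) 𝔴)
  have hev : 𝒯.xi (𝒯.map (fun p => p.2 p.1) 𝔮.1)
      = 𝒯.xi (𝒯.map (fun y => ⨆ x : {x : (T X → V) × T (T X × X) // auxF 𝒯 X x = y},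
          auxG 𝒯 a x.1) (𝒯.map (fun u => (u.1.1.1, u.1.2)) 𝔴)) := by
    rw [← h𝔴1, aux_map_map, aux_map_map]
    exact congrArg 𝒯.xi (aux_map_congr 𝒯
      (fun u => (congrFun u.2 u.1.1.1).trans (aux_hH 𝒯 a (u.1.1.1, u.1.2))) 𝔴)
  rw [hev, ← hnat, aux_tens_iSup_left]
  refine iSup_le fun 𝔓 => ?_
  -- component facts
  have c1 := congrArg (𝒯.map Prod.snd) 𝔓.2
  rw [aux_map_map, aux_map_map] at c1
  have f1 : 𝒯.map Prod.fst 𝔓.1 = 𝔭 := by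
    rw [← h𝔴2]
    exact (aux_map_congr 𝒯 (fun d => rfl) 𝔓.1).trans
      (c1.trans (aux_map_congr 𝒯 (fun u => rfl) 𝔴))
  have c2 := congrArg (𝒯.map Prod.fst) 𝔓.2
  rw [aux_map_map, aux_map_map] at c2
  have f2 : 𝒯.map (fun d : (T X → V) × T (T X × X) =>
      𝒯.m (𝒯.map Prod.fst d.2)) 𝔓.1 = 𝒯.map Prod.fst 𝔮.1 := by
    rw [← h𝔴1, aux_map_map]
    exact (aux_map_congr 𝒯 (fun d => rfl) 𝔓.1).trans
      (c2.trans (aux_map_congr 𝒯 (fun u => rfl) 𝔴))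
  -- split the integrand
  have hsplit : 𝒯.xi (𝒯.map (auxG 𝒯 a) 𝔓.1)
      = 𝒯.tens (𝒯.xi (𝒯.map (fun d : (T X → V) × T (T X × X) =>
          d.1 (𝒯.map Prod.snd d.2)) 𝔓.1))
        (𝒯.xi (𝒯.map (fun d : (T X → V) × T (T X × X) =>
          𝒯.xi (𝒯.map (fun q : T X × X => a.rel q.1 q.2) d.2)) 𝔓.1)) := by
    have h0 := 𝒯.xi_tens (𝒯.map (fun d : (T X → V) × T (T X × X) =>
      (d.1 (𝒯.map Prod.snd d.2),
        𝒯.xi (𝒯.map (fun q : T X × X => a.rel q.1 q.2) d.2))) 𝔓.1)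
    rw [aux_map_map, aux_map_map, aux_map_map] at h0
    exact h0
  rw [hsplit]
  -- step 1 : evaluation against `powRel`
  have hq2 : 𝒯.map Prod.snd (𝒯.map (fun d : (T X → V) × T (T X × X) =>
      (𝒯.map Prod.snd d.2, d.1)) 𝔓.1) = 𝔭 := by
    rw [aux_map_map]
    exact (aux_map_congr 𝒯 (fun d => rfl) 𝔓.1).trans f1
  have step1 : 𝒯.tens (𝒯.xi (𝒯.map (fun d : (T X → V) × T (T X × X) =>
        d.1 (𝒯.map Prod.snd d.2)) 𝔓.1)) (𝒯.powRel X 𝔭 φ)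
      ≤ φ (𝒯.m (𝒯.map (fun d : (T X → V) × T (T X × X) =>
        𝒯.map Prod.snd d.2) 𝔓.1)) := by
    refine aux_ihom_le 𝒯 (le_trans (iInf_le _
      ⟨𝒯.map (fun d : (T X → V) × T (T X × X) => (𝒯.map Prod.snd d.2, d.1)) 𝔓.1, hq2⟩) ?_)
    refine le_of_eq ?_
    have g1 : 𝒯.xi (𝒯.map (fun p => p.2 p.1)
        (𝒯.map (fun d : (T X → V) × T (T X × X) => (𝒯.map Prod.snd d.2, d.1)) 𝔓.1))
        = 𝒯.xi (𝒯.map (fun d : (T X → V) × T (T X × X) =>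
          d.1 (𝒯.map Prod.snd d.2)) 𝔓.1) := by
      rw [aux_map_map]
    have g2 : 𝒯.map Prod.fst (𝒯.map (fun d : (T X → V) × T (T X × X) =>
        (𝒯.map Prod.snd d.2, d.1)) 𝔓.1)
        = 𝒯.map (fun d : (T X → V) × T (T X × X) => 𝒯.map Prod.snd d.2) 𝔓.1 := by
      rw [aux_map_map]
    rw [g1, g2]
  -- step 2 : the `T_ξ a · m°` part
  have step2 : 𝒯.xi (𝒯.map (fun d : (T X → V) × T (T X × X) =>
        𝒯.xi (𝒯.map (fun q : T X × X => a.rel q.1 q.2) d.2)) 𝔓.1)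
      ≤ auxRr 𝒯 a (𝒯.m (𝒯.map Prod.fst 𝔮.1))
        (𝒯.m (𝒯.map (fun d : (T X → V) × T (T X × X) =>
          𝒯.map Prod.snd d.2) 𝔓.1)) := by
    have e : 𝒯.xi (𝒯.map (fun d : (T X → V) × T (T X × X) =>
        𝒯.xi (𝒯.map (fun q : T X × X => a.rel q.1 q.2) d.2)) 𝔓.1)
        = 𝒯.xi (𝒯.map (fun q : T X × X => a.rel q.1 q.2)
            (𝒯.m (𝒯.map Prod.snd 𝔓.1))) := by
      rw [𝒯.m_nat, 𝒯.xi_m, aux_map_map, aux_map_map]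
    rw [e]
    have hfst : 𝒯.m (𝒯.map Prod.fst (𝒯.m (𝒯.map Prod.snd 𝔓.1)))
        = 𝒯.m (𝒯.map Prod.fst 𝔮.1) := by
      rw [𝒯.m_nat, 𝒯.m_assoc, aux_map_map, aux_map_map, ← f2]
    have hsnd : 𝒯.map Prod.snd (𝒯.m (𝒯.map Prod.snd 𝔓.1))
        = 𝒯.m (𝒯.map (fun d : (T X → V) × T (T X × X) =>
          𝒯.map Prod.snd d.2) 𝔓.1) := by
      rw [𝒯.m_nat, aux_map_map]
    exact le_iSup_of_le ⟨𝒯.map Prod.fst (𝒯.m (𝒯.map Prod.snd 𝔓.1)), hfst⟩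
      (le_iSup_of_le ⟨𝒯.m (𝒯.map Prod.snd 𝔓.1), rfl, hsnd⟩ le_rfl)
  -- combine
  refine le_trans (le_of_eq (by
      rw [𝒯.tens_assoc, 𝒯.tens_comm
        (𝒯.xi (𝒯.map (fun d : (T X → V) × T (T X × X) =>
          𝒯.xi (𝒯.map (fun q : T X × X => a.rel q.1 q.2) d.2)) 𝔓.1)) (𝒯.powRel X 𝔭 φ),
        ← 𝒯.tens_assoc])) ?_
  refine le_trans (aux_tens_mono 𝒯 step1 step2) ?_
  exact le_iSup_of_le (𝒯.m (𝒯.map (fun d : (T X → V) × T (T X × X) =>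
    𝒯.map Prod.snd d.2) 𝔓.1)) le_rfl

end Statement16Aux


/-- Corollary 3.2. For every `𝒯`-category `(X,a)`, the inclusion
`𝒯`-functor `i_X : X̂ ↪ V^{|X|}` has a left adjoint `R_X : V^{|X|} → X̂` given by
`R_X(ψ)(𝔵) = ⋁_{𝔶 ∈ T X} ψ(𝔶) ⊗ r(𝔵,𝔶)` where `r = T_ξ a · m_X°`. -/
theorem statement16 (𝒯 : TopTheory V T) {X : Type u} (a : 𝒯.TCatStr X)
    (ps : 𝒯.TCatStr (T X → V)) (hps : ∀ (𝔭 : T (T X → V)) (ψ : T X → V),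
      ps.rel 𝔭 ψ = 𝒯.powRel X 𝔭 ψ)
    (hs : 𝒯.TCatStr (Hat a)) (hhs : IsHatStr a hs) :
    ∃ R : (T X → V) → Hat a,
      (∀ (ψ : T X → V) (𝔵 : T X),
        (R ψ).1 𝔵 = ⨆ 𝔶 : T X, 𝒯.tens (ψ 𝔶)
          (⨆ 𝔛 : {𝔛 : T (T X) // 𝒯.m 𝔛 = 𝔵}, 𝒯.Txi a.rel 𝔛.1 𝔶)) ∧
      IsTFunctor ps hs R ∧ IsTFunctor hs ps Subtype.val ∧
      IsAdjunction ps hs R Subtype.val := by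
  have hle6 : ∀ ψ : T X → V, ∀ 𝔵, ψ 𝔵 ≤ auxRfun 𝒯 a ψ 𝔵 := fun ψ 𝔵 =>
    le_iSup_of_le 𝔵 ((le_of_eq (aux_tens_unit_right 𝒯 (ψ 𝔵)).symm).trans
      (aux_tens_le_right 𝒯 (ψ 𝔵) (aux_unit_le_rr 𝒯 a 𝔵)))
  have hle5 : ∀ φ : Hat a, ∀ 𝔵, auxRfun 𝒯 a φ.1 𝔵 ≤ φ.1 𝔵 := by
    intro φ 𝔵
    refine iSup_le fun 𝔶 => ?_
    rw [𝒯.tens_comm, show auxRr 𝒯 a 𝔵 𝔶 = ⨆ 𝔛 : {𝔛 : T (T X) // 𝒯.m 𝔛 = 𝔵},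
      𝒯.Txi a.rel 𝔛.1 𝔶 from rfl, aux_tens_iSup_left]
    refine iSup_le fun 𝔛 => ?_
    refine le_trans ?_ (φ.2.1 𝔵 PUnit.unit)
    exact le_iSup_of_le 𝔛 (le_iSup_of_le 𝔶 le_rfl)
  have hpre : ∀ ψ : T X → V, IsPresheaf a (auxRfun 𝒯 a ψ) := by
    intro ψ
    constructor
    · intro 𝔵 y
      refine iSup_le fun 𝔛 => iSup_le fun 𝔶 => ?_
      show 𝒯.tens (𝒯.Txi a.rel 𝔛.1 𝔶) (auxRfun 𝒯 a ψ 𝔶) ≤ auxRfun 𝒯 a ψ 𝔵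
      rw [show auxRfun 𝒯 a ψ 𝔶 = ⨆ 𝔷 : T X, 𝒯.tens (ψ 𝔷) (auxRr 𝒯 a 𝔶 𝔷) from rfl,
        aux_tens_iSup]
      refine iSup_le fun 𝔷 => ?_
      refine le_trans (le_of_eq (by
        rw [← 𝒯.tens_assoc, 𝒯.tens_comm (𝒯.Txi a.rel 𝔛.1 𝔶) (ψ 𝔷), 𝒯.tens_assoc])) ?_
      refine le_trans (aux_tens_le_right 𝒯 (ψ 𝔷) (aux_core 𝒯 a 𝔛.1 𝔛.2 𝔶 𝔷)) ?_
      exact le_iSup_of_le 𝔷 le_rfl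
    · intro 𝔵 y
      cases y
      refine iSup_le fun 𝔛 => iSup_le fun 𝔲 => ?_
      show 𝒯.tens (𝒯.Txi (fun 𝔵' (_ : PUnit.{u+1}) => auxRfun 𝒯 a ψ 𝔵') 𝔛.1 𝔲)
        (𝒯.unitRel PUnit 𝔲 PUnit.unit) ≤ auxRfun 𝒯 a ψ 𝔵
      rw [show 𝒯.unitRel PUnit 𝔲 PUnit.unit = ⨆ _ : 𝔲 = 𝒯.e PUnit.unit, 𝒯.unit
        from rfl, aux_tens_iSup]
      refine iSup_le fun h𝔲 => ?_
      rw [aux_tens_unit_right]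
      rw [show 𝒯.Txi (fun 𝔵' (_ : PUnit.{u+1}) => auxRfun 𝒯 a ψ 𝔵') 𝔛.1 𝔲
        = ⨆ 𝔴 : {w : T (T X × PUnit.{u+1}) //
            𝒯.map Prod.fst w = 𝔛.1 ∧ 𝒯.map Prod.snd w = 𝔲},
          𝒯.xi (𝒯.map (fun p => auxRfun 𝒯 a ψ p.1) 𝔴.1) from rfl]
      refine iSup_le fun 𝔴 => ?_
      have hsnd : 𝒯.map Prod.snd 𝔴.1 = 𝒯.e PUnit.unit := 𝔴.2.2.trans h𝔲
      have h7 : 𝒯.map Prod.snd (𝒯.map (fun p : T X × PUnit.{u+1} =>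
          ((p.1, auxRfun 𝒯 a ψ) : T X × (T X → V))) 𝔴.1)
          = 𝒯.map (fun _ : T X × PUnit.{u+1} => auxRfun 𝒯 a ψ) 𝔴.1 :=
        (aux_map_map 𝒯 _ _ _).trans (aux_map_congr 𝒯 (fun x => rfl) _)
      have h9 : 𝒯.map (fun _ : PUnit.{u+1} => auxRfun 𝒯 a ψ) (𝒯.map Prod.snd 𝔴.1)
          = 𝒯.map (fun _ : T X × PUnit.{u+1} => auxRfun 𝒯 a ψ) 𝔴.1 :=
        (aux_map_map 𝒯 _ _ _).trans (aux_map_congr 𝒯 (fun x => rfl) _)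
      have hq : 𝒯.map Prod.snd (𝒯.map (fun p : T X × PUnit.{u+1} =>
          ((p.1, auxRfun 𝒯 a ψ) : T X × (T X → V))) 𝔴.1) = 𝒯.e (auxRfun 𝒯 a ψ) := by
        rw [h7, ← h9, hsnd, 𝒯.e_nat]
      have hle := ps.le_refl (auxRfun 𝒯 a ψ)
      rw [hps] at hle
      have h2 := le_trans hle (iInf_le _
        ⟨𝒯.map (fun p : T X × PUnit.{u+1} =>
          ((p.1, auxRfun 𝒯 a ψ) : T X × (T X → V))) 𝔴.1, hq⟩)
      have h3 := aux_of_unit_le_ihom 𝒯 h2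
      have h6 : 𝒯.map Prod.fst (𝒯.map (fun p : T X × PUnit.{u+1} =>
          ((p.1, auxRfun 𝒯 a ψ) : T X × (T X → V))) 𝔴.1) = 𝒯.map Prod.fst 𝔴.1 :=
        (aux_map_map 𝒯 _ _ _).trans (aux_map_congr 𝒯 (fun x => rfl) _)
      have hm5 : 𝒯.m (𝒯.map Prod.fst (𝒯.map (fun p : T X × PUnit.{u+1} =>
          ((p.1, auxRfun 𝒯 a ψ) : T X × (T X → V))) 𝔴.1)) = 𝔵 := by
        rw [h6, 𝔴.2.1, 𝔛.2]
      rw [hm5] at h3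
      have h10 : 𝒯.xi (𝒯.map (fun p : T X × (T X → V) => p.2 p.1)
          (𝒯.map (fun p : T X × PUnit.{u+1} =>
            ((p.1, auxRfun 𝒯 a ψ) : T X × (T X → V))) 𝔴.1))
          = 𝒯.xi (𝒯.map (fun p : T X × PUnit.{u+1} => auxRfun 𝒯 a ψ p.1) 𝔴.1) :=
        congrArg 𝒯.xi ((aux_map_map 𝒯 _ _ _).trans (aux_map_congr 𝒯 (fun x => rfl) _))
      exact le_trans (le_of_eq h10.symm) h3
  refine ⟨fun ψ => (⟨auxRfun 𝒯 a ψ, hpre ψ⟩ : Hat a), fun ψ 𝔵 => rfl, ?_, ?_, ?_, ?_⟩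
  · -- `R` is a `𝒯`-functor
    intro 𝔭 ψ
    rw [hps]
    have hmapeq : 𝒯.map Subtype.val
        (𝒯.map (fun ψ' => (⟨auxRfun 𝒯 a ψ', hpre ψ'⟩ : Hat a)) 𝔭)
        = 𝒯.map (auxRfun 𝒯 a) 𝔭 :=
      (aux_map_map 𝒯 _ _ _).trans (aux_map_congr 𝒯 (fun ψ' => rfl) _)
    exact le_trans (aux_G1 𝒯 a 𝔭 ψ) (le_of_eq ((hhs _ _).trans
      (congrArg (fun q => 𝒯.powRel X q (auxRfun 𝒯 a ψ)) hmapeq)).symm)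
  · -- the inclusion is a `𝒯`-functor
    intro 𝔭 ψ
    rw [hhs, hps]
    exact le_rfl
  · -- unit of the adjunction
    intro 𝔭 ψ
    rw [hps, hps]
    exact aux_powRel_mono 𝒯 𝔭 (hle6 ψ)
  · -- counit of the adjunction
    intro 𝔭 φ
    rw [hhs]
    refine le_trans (le_of_eq (hhs _ _)) ?_
    exact aux_powRel_mono 𝒯 _ (hle5 φ)


end TopTheory

end Paper
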